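/- Let q = 2^e with e ≥ 1 and let F_{q^2} be the field with q^2 elements. Let r be a natural number with 0 < 2^r < q, let k be an odd natural number and j a natural number with k < q/2^r and j < q/2^r. Then for every a ∈ F_{q^2} and every γ ∈ F_{q^2} with γ ≠ 0, the remainder of T^{k·2^r·q + j·2^r} upon division by the polynomial P_{a,γ} = (T - a^q)^{q+1} - γ in F_{q^2}[T] has degree at most q + 1 - 2^r. -/
import Mathlib

open Polynomial

private lemma key_arith (A q u v : ℕ) (hA : 0 < A) (hu : A * (u + 1) ≤ q)
    (hv : A * (v + 1) ≤ q) :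
    (if u ≤ v then A * u else A * u - 1) * (q + 1)
        + (if u ≤ v then A * (v - u) else q + 1 - A * (u - v)) = A * q * u + A * v
      ∧ (if u ≤ v then A * (v - u) else q + 1 - A * (u - v)) + A ≤ q + 1 := by
  by_cases h : u ≤ v
  · obtain ⟨w, rfl⟩ := Nat.exists_eq_add_of_le h
    simp only [if_pos le_rfl, Nat.add_sub_cancel_left, if_pos h]
    constructor
    · ring
    · have : A * w + A ≤ A * (u + w + 1) := by nlinarith
      omega
  · push_neg at h
    have hvu : v ≤ u := h.le
    have h1 : 1 ≤ A * u := by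
      have : 1 ≤ u := by omega
      nlinarith
    have h2 : A * (u - v) ≤ q + 1 := by
      have : A * (u - v) ≤ A * (u + 1) := Nat.mul_le_mul_left _ (by omega)
      omega
    have h3 : A ≤ A * (u - v) := Nat.le_mul_of_pos_right A (by omega)
    simp only [if_neg (by omega : ¬ u ≤ v)]
    refine ⟨?_, by omega⟩
    zify [h1, h2, hvu]
    ring

theorem degree_pow_modByMonic_le (e : ℕ) (he : 1 ≤ e) (q : ℕ) (hq : q = 2 ^ e)
    (F : Type*) [Field F] [Fintype F] (hF : Fintype.card F = q ^ 2)
    (r : ℕ) (hr : 0 < 2 ^ r) (hrq : 2 ^ r < q)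
    (k j : ℕ) (hk : Odd k) (hkq : k < q / 2 ^ r) (hjq : j < q / 2 ^ r)
    (a γ : F) (hγ : γ ≠ 0) :
    ((X ^ (k * 2 ^ r * q + j * 2 ^ r) : F[X]) %ₘ ((X - C (a ^ q)) ^ (q + 1) - C γ)).degree
      ≤ (q + 1 - 2 ^ r : ℕ) := by
  -- characteristic 2
  have hchar : ringChar F = 2 := by
    obtain ⟨n, hp, hc⟩ := FiniteField.card F (ringChar F)
    have hdvd : ringChar F ∣ 2 ^ (e * 2) := by
      rw [pow_mul, ← hq, ← hF, hc]
      exact dvd_pow_self _ n.ne_zero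
    exact (Nat.prime_dvd_prime_iff_eq hp Nat.prime_two).mp (hp.dvd_of_dvd_pow hdvd)
  haveI : CharP F 2 := hchar ▸ ringChar.charP F
  haveI : Fact (Nat.Prime 2) := ⟨Nat.prime_two⟩
  set A := 2 ^ r with hA
  set b : F := a ^ q with hb
  set Y : F[X] := X - C b with hY
  set P : F[X] := (X - C b) ^ (q + 1) - C γ with hP
  have hre : r < e := by
    rw [hq] at hrq
    exact (Nat.pow_lt_pow_iff_right (by norm_num)).mp hrq
  have hAq : A ∣ q := hq ▸ pow_dvd_pow 2 hre.le
  have hmul : ∀ m : ℕ, m < q / A → A * (m + 1) ≤ q := by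
    intro m hm
    calc A * (m + 1) = (m + 1) * A := mul_comm _ _
      _ ≤ q / A * A := Nat.mul_le_mul_right _ (by omega)
      _ = q := Nat.div_mul_cancel hAq
  have hkA : ∀ u ≤ k, A * (u + 1) ≤ q := fun u hu =>
    le_trans (Nat.mul_le_mul_left _ (by omega)) (hmul k hkq)
  have hjA : ∀ v ≤ j, A * (v + 1) ≤ q := fun v hv =>
    le_trans (Nat.mul_le_mul_left _ (by omega)) (hmul j hjq)
  -- Frobenius computations
  have hXY : (X : F[X]) = Y + C b := by rw [hY]; ring
  have frob : ∀ t : ℕ, (X : F[X]) ^ (2 ^ t) = Y ^ (2 ^ t) + C (b ^ (2 ^ t)) := by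
    intro t
    rw [hXY, add_pow_char_pow, ← C_pow]
  have e1 : (X : F[X]) ^ (A * q) = Y ^ (A * q) + C (b ^ (A * q)) := by
    have hAq2 : A * q = 2 ^ (r + e) := by rw [hA, hq, pow_add]
    rw [hAq2]; exact frob (r + e)
  have e2 : (X : F[X]) ^ A = Y ^ A + C (b ^ A) := frob r
  set c : F := b ^ (A * q) with hc
  set d : F := b ^ A with hd
  -- the functions M and S
  set M : ℕ → ℕ → ℕ := fun u v => if u ≤ v then A * u else A * u - 1 with hM
  set S : ℕ → ℕ → ℕ := fun u v => if u ≤ v then A * (v - u) else q + 1 - A * (u - v) with hS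
  have hkey : ∀ u ≤ k, ∀ v ≤ j,
      M u v * (q + 1) + S u v = A * q * u + A * v ∧ S u v + A ≤ q + 1 := by
    intro u hu v hv
    exact key_arith A q u v hr (hkA u hu) (hjA v hv)
  -- binomial expansion
  have expand : (X : F[X]) ^ (k * A * q + j * A) =
      ∑ u ∈ Finset.range (k + 1), ∑ v ∈ Finset.range (j + 1),
        ((Y ^ (A * q)) ^ u * (C c) ^ (k - u) * (k.choose u : F[X]))
          * ((Y ^ A) ^ v * (C d) ^ (j - v) * (j.choose v : F[X])) := by
    have hN : k * A * q + j * A = (A * q) * k + A * j := by ring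
    rw [hN, pow_add, pow_mul X (A * q) k, pow_mul X A j, e1, e2, add_pow, add_pow, Finset.sum_mul_sum]
  set f : F[X] := ∑ u ∈ Finset.range (k + 1), ∑ v ∈ Finset.range (j + 1),
      C (γ ^ (M u v) * c ^ (k - u) * (k.choose u : F) * d ^ (j - v) * (j.choose v : F))
        * Y ^ (S u v) with hf
  -- divisibility
  have hdvd : P ∣ X ^ (k * A * q + j * A) - f := by
    rw [expand, hf, ← Finset.sum_sub_distrib]
    refine Finset.dvd_sum fun u hu => ?_
    rw [← Finset.sum_sub_distrib]
    refine Finset.dvd_sum fun v hv => ?_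
    obtain ⟨hid, hbd⟩ := hkey u (by simpa using Nat.lt_succ_iff.mp (Finset.mem_range.mp hu))
      v (by simpa using Nat.lt_succ_iff.mp (Finset.mem_range.mp hv))
    have hYe : (Y ^ (A * q)) ^ u * (Y ^ A) ^ v = Y ^ (M u v * (q + 1) + S u v) := by
      rw [← pow_mul, ← pow_mul, ← pow_add, hid]
    have hterm : ((Y ^ (A * q)) ^ u * (C c) ^ (k - u) * (k.choose u : F[X]))
          * ((Y ^ A) ^ v * (C d) ^ (j - v) * (j.choose v : F[X]))
        - C (γ ^ (M u v) * c ^ (k - u) * (k.choose u : F) * d ^ (j - v) * (j.choose v : F))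
          * Y ^ (S u v)
        = (Y ^ (M u v * (q + 1) + S u v) - C (γ ^ (M u v)) * Y ^ (S u v))
          * ((C c) ^ (k - u) * (k.choose u : F[X])
            * ((C d) ^ (j - v) * (j.choose v : F[X]))) := by
      simp only [C_mul, C_pow, map_natCast]
      rw [sub_mul, ← hYe]
      ring
    rw [hterm]
    refine Dvd.dvd.mul_right ?_ _
    have heq : Y ^ (M u v * (q + 1) + S u v) - C (γ ^ (M u v)) * Y ^ (S u v)
        = ((Y ^ (q + 1)) ^ (M u v) - (C γ) ^ (M u v)) * Y ^ (S u v) := by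
      rw [pow_add, pow_mul', ← C_pow, sub_mul]
    rw [heq, hP, hY]
    exact (sub_dvd_pow_sub_pow _ _ (M u v)).mul_right _
  -- P is monic of degree q+1
  have hdegpow : ((X - C b) ^ (q + 1) : F[X]).degree = (q + 1 : ℕ) := by
    rw [degree_pow, degree_X_sub_C]
    simp
  have hdegC : (C γ : F[X]).degree < ((X - C b) ^ (q + 1) : F[X]).degree := by
    rw [hdegpow]
    exact degree_C_le.trans_lt (by exact_mod_cast q.succ_pos)
  have hPm : P.Monic := ((monic_X_sub_C b).pow (q + 1)).sub_of_left hdegC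
  have hdegP : P.degree = (q + 1 : ℕ) := by
    rw [hP, degree_sub_eq_left_of_degree_lt hdegC, hdegpow]
  -- degree of f
  have hdegf : f.degree ≤ ((q + 1 - A : ℕ) : WithBot ℕ) := by
    rw [hf]
    refine (degree_sum_le _ _).trans (Finset.sup_le fun u hu => ?_)
    refine (degree_sum_le _ _).trans (Finset.sup_le fun v hv => ?_)
    refine (degree_mul_le _ _).trans ?_
    obtain ⟨hid, hbd⟩ := hkey u (by simpa using Nat.lt_succ_iff.mp (Finset.mem_range.mp hu))
      v (by simpa using Nat.lt_succ_iff.mp (Finset.mem_range.mp hv))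
    calc (C (γ ^ (M u v) * c ^ (k - u) * (k.choose u : F) * d ^ (j - v)
            * (j.choose v : F))).degree + (Y ^ (S u v)).degree
        ≤ 0 + ((S u v : ℕ) : WithBot ℕ) := by
          refine add_le_add degree_C_le ?_
          rw [hY, degree_pow, degree_X_sub_C]
          simp
      _ ≤ ((q + 1 - A : ℕ) : WithBot ℕ) := by
          rw [zero_add]
          exact_mod_cast Nat.cast_le.mpr (Nat.le_sub_of_add_le hbd)
  have hdegflt : f.degree < P.degree := by
    rw [hdegP]
    exact lt_of_le_of_lt hdegf (by exact_mod_cast Nat.cast_lt.mpr (Nat.sub_lt q.succ_pos hr))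
  -- conclude
  have hmod : (X : F[X]) ^ (k * A * q + j * A) %ₘ P = f := by
    have h0 : (X ^ (k * A * q + j * A) - f) %ₘ P = 0 :=
      (modByMonic_eq_zero_iff_dvd hPm).mpr hdvd
    calc (X : F[X]) ^ (k * A * q + j * A) %ₘ P
        = ((X ^ (k * A * q + j * A) - f) + f) %ₘ P := by rw [sub_add_cancel]
      _ = (X ^ (k * A * q + j * A) - f) %ₘ P + f %ₘ P := add_modByMonic _ _
      _ = f := by rw [h0, zero_add, (modByMonic_eq_self_iff hPm).mpr hdegflt]
  rw [hmod]
  exact hdegf
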